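/- Let k be a field, and let C and M be split semisimple k-linear categories with finite-dimensional hom-spaces, such that C has only finitely many isomorphism classes of simple objects. Then every k-linear functor F : C ⥤ M admits a right adjoint; moreover, this right adjoint is simultaneously a left adjoint of F. -/

import Mathlib

open CategoryTheory CategoryTheory.Limits Module

/-- A `k`-linear category (with its given linear structure) is *split semisimple* if it has
finite biproducts, finite-dimensional hom-spaces, every object is isomorphic to a finite
biproduct of simple objects, every nonzero morphism between simple objects is an isomorphism,
and the endomorphism algebra of each simple object is `k · id`. -/
structure IsSplitSemisimple (k : Type*) [Field k] (C : Type*) [Category C]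
    [Preadditive C] [Linear k C] : Prop where
  hasFiniteBiproducts : HasFiniteBiproducts C
  finiteDimensionalHom : ∀ X Y : C, FiniteDimensional k (X ⟶ Y)
  decomp : ∀ X : C, ∃ (n : ℕ) (f : Fin n → C) (b : Bicone f),
    Nonempty b.IsBilimit ∧ (∀ i, Simple (f i)) ∧ Nonempty (X ≅ b.pt)
  isIso_of_ne_zero : ∀ ⦃X Y : C⦄, Simple X → Simple Y → ∀ f : X ⟶ Y, f ≠ 0 → IsIso f
  exists_smul_id : ∀ ⦃X : C⦄, Simple X → ∀ f : X ⟶ X, ∃ c : k, f = c • 𝟙 X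

namespace SSAux

variable {k : Type*} [Field k]

section TraceCat

variable {A : Type*} [Category A] [Preadditive A] [CategoryTheory.Linear k A]

noncomputable def coeff (hA : IsSplitSemisimple k A) {X : A} (hX : Simple X) (f : X ⟶ X) : k :=
  (hA.exists_smul_id hX f).choose

lemma coeff_spec (hA : IsSplitSemisimple k A) {X : A} (hX : Simple X) (f : X ⟶ X) :
    f = coeff hA hX f • 𝟙 X := (hA.exists_smul_id hX f).choose_spec

lemma coeff_unique (hA : IsSplitSemisimple k A) {X : A} (hX : Simple X) {f : X ⟶ X} {c : k}
    (h : f = c • 𝟙 X) : coeff hA hX f = c := by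
  haveI := hX
  have h2 := (coeff_spec hA hX f).symm.trans h
  have h3 : (coeff hA hX f - c) • 𝟙 X = 0 := by rw [sub_smul, h2, sub_self]
  rcases smul_eq_zero.mp h3 with h4 | h4
  · exact sub_eq_zero.mp h4
  · exact absurd h4 (id_nonzero X)

lemma coeff_zero (hA : IsSplitSemisimple k A) {X : A} (hX : Simple X) :
    coeff hA hX (0 : X ⟶ X) = 0 := coeff_unique hA hX (by simp)

lemma coeff_id (hA : IsSplitSemisimple k A) {X : A} (hX : Simple X) :
    coeff hA hX (𝟙 X) = 1 := coeff_unique hA hX (by simp)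

lemma coeff_add (hA : IsSplitSemisimple k A) {X : A} (hX : Simple X) (f g : X ⟶ X) :
    coeff hA hX (f + g) = coeff hA hX f + coeff hA hX g := by
  refine coeff_unique hA hX ?_
  conv_lhs => rw [coeff_spec hA hX f, coeff_spec hA hX g]
  rw [add_smul]

lemma coeff_smul (hA : IsSplitSemisimple k A) {X : A} (hX : Simple X) (c : k) (f : X ⟶ X) :
    coeff hA hX (c • f) = c * coeff hA hX f := by
  refine coeff_unique hA hX ?_
  conv_lhs => rw [coeff_spec hA hX f]
  rw [smul_smul]

lemma coeff_sum (hA : IsSplitSemisimple k A) {X : A} (hX : Simple X) {J : Type*}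
    (s : Finset J) (f : J → (X ⟶ X)) :
    coeff hA hX (∑ j ∈ s, f j) = ∑ j ∈ s, coeff hA hX (f j) := by
  classical
  induction s using Finset.induction with
  | empty => simp [coeff_zero hA hX]
  | insert j s hj ih => simp [Finset.sum_insert hj, coeff_add hA hX, ih]

lemma coeff_comm (hA : IsSplitSemisimple k A) {X Y : A} (hX : Simple X) (hY : Simple Y)
    (x : X ⟶ Y) (y : Y ⟶ X) :
    coeff hA hX (x ≫ y) = coeff hA hY (y ≫ x) := by
  by_cases hx : x = 0
  · rw [hx, zero_comp, comp_zero, coeff_zero, coeff_zero]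
  · haveI := hA.isIso_of_ne_zero hX hY x hx
    refine (coeff_unique hA hY ?_).symm
    calc y ≫ x = inv x ≫ (x ≫ y) ≫ x := by simp
    _ = inv x ≫ (coeff hA hX (x ≫ y) • 𝟙 X) ≫ x := by rw [← coeff_spec]
    _ = coeff hA hX (x ≫ y) • 𝟙 Y := by simp

structure DecompData {A : Type*} [Category A] [Preadditive A] (X : A) where
  n : ℕ
  s : Fin n → A
  p : ∀ j, X ⟶ s j
  q : ∀ j, s j ⟶ X
  simple : ∀ j, Simple (s j)
  qp : ∀ j, q j ≫ p j = 𝟙 (s j)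
  orth : ∀ j j', j ≠ j' → q j ≫ p j' = 0
  total : ∑ j, p j ≫ q j = 𝟙 X

lemma nonempty_decompData (hA : IsSplitSemisimple k A) (X : A) :
    Nonempty (DecompData X) := by
  obtain ⟨n, f, b, ⟨hb⟩, hsim, ⟨e⟩⟩ := hA.decomp X
  refine ⟨⟨n, f, fun j => e.hom ≫ b.π j, fun j => b.ι j ≫ e.inv, hsim, ?_, ?_, ?_⟩⟩
  · intro j
    have : (b.ι j ≫ e.inv) ≫ e.hom ≫ b.π j = b.ι j ≫ b.π j := by simp
    rw [this, bicone_ι_π_self]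
  · intro j j' h
    have : (b.ι j ≫ e.inv) ≫ e.hom ≫ b.π j' = b.ι j ≫ b.π j' := by simp
    rw [this, bicone_ι_π_ne _ h]
  · have : ∀ j, (e.hom ≫ b.π j) ≫ b.ι j ≫ e.inv = e.hom ≫ (b.π j ≫ b.ι j) ≫ e.inv := by
      intro j; simp
    rw [Finset.sum_congr rfl (fun j _ => this j), ← Preadditive.comp_sum, ← Preadditive.sum_comp,
      CategoryTheory.Limits.IsBilimit.total hb]
    simp

noncomputable def dec (hA : IsSplitSemisimple k A) (X : A) : DecompData X :=
  Classical.choice (nonempty_decompData hA X)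

noncomputable def tr (hA : IsSplitSemisimple k A) {X : A} (f : X ⟶ X) : k :=
  ∑ j, coeff hA ((dec hA X).simple j) ((dec hA X).q j ≫ f ≫ (dec hA X).p j)

lemma tr_add (hA : IsSplitSemisimple k A) {X : A} (f g : X ⟶ X) :
    tr hA (f + g) = tr hA f + tr hA g := by
  rw [tr, tr, tr, ← Finset.sum_add_distrib]
  refine Finset.sum_congr rfl fun j _ => ?_
  rw [← coeff_add]
  congr 1
  simp [Preadditive.add_comp, Preadditive.comp_add]

lemma tr_smul (hA : IsSplitSemisimple k A) {X : A} (c : k) (f : X ⟶ X) :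
    tr hA (c • f) = c * tr hA f := by
  rw [tr, tr, Finset.mul_sum]
  refine Finset.sum_congr rfl fun j _ => ?_
  rw [← coeff_smul]
  congr 1
  simp

lemma tr_comm_key (hA : IsSplitSemisimple k A) {X Y : A} (f : X ⟶ Y) (g : Y ⟶ X)
    (D : DecompData X) (E : DecompData Y) :
    (∑ j, coeff hA (D.simple j) (D.q j ≫ (f ≫ g) ≫ D.p j)) =
    ∑ j, ∑ l, coeff hA (D.simple j) ((D.q j ≫ f ≫ E.p l) ≫ (E.q l ≫ g ≫ D.p j)) := by
  refine Finset.sum_congr rfl fun j _ => ?_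
  have h1 : D.q j ≫ (f ≫ g) ≫ D.p j
      = ∑ l, (D.q j ≫ f ≫ E.p l) ≫ (E.q l ≫ g ≫ D.p j) := by
    conv_lhs => rw [show f ≫ g = f ≫ (𝟙 Y) ≫ g by simp, ← E.total]
    simp [Preadditive.sum_comp, Preadditive.comp_sum]
  rw [h1, coeff_sum]

lemma tr_comm (hA : IsSplitSemisimple k A) {X Y : A} (f : X ⟶ Y) (g : Y ⟶ X) :
    tr hA (f ≫ g) = tr hA (g ≫ f) := by
  have key2 :
      (∑ j, ∑ l, coeff hA ((dec hA X).simple j)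
        (((dec hA X).q j ≫ f ≫ (dec hA Y).p l) ≫ ((dec hA Y).q l ≫ g ≫ (dec hA X).p j))) =
      ∑ l, ∑ j, coeff hA ((dec hA Y).simple l)
        ((((dec hA Y).q l ≫ g ≫ (dec hA X).p j)) ≫ ((dec hA X).q j ≫ f ≫ (dec hA Y).p l)) := by
    rw [Finset.sum_comm]
    exact Finset.sum_congr rfl fun l _ => Finset.sum_congr rfl fun j _ =>
      coeff_comm hA ((dec hA X).simple j) ((dec hA Y).simple l) _ _
  rw [tr, tr, tr_comm_key hA f g (dec hA X) (dec hA Y), key2,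
    ← tr_comm_key hA g f (dec hA Y) (dec hA X)]

lemma tr_simple_id (hA : IsSplitSemisimple k A) {X : A} (hX : Simple X) :
    tr hA (𝟙 X) = 1 := by
  haveI := hX
  set D := dec hA X with hD
  have hpq : ∀ j, ∃ c : k, c ≠ 0 ∧ D.p j ≫ D.q j = c • 𝟙 X := by
    intro j
    obtain ⟨c, hc⟩ := hA.exists_smul_id hX (D.p j ≫ D.q j)
    refine ⟨c, ?_, hc⟩
    rintro rfl
    rw [zero_smul] at hc
    haveI := D.simple j
    refine id_nonzero (D.s j) ?_
    calc 𝟙 (D.s j) = (D.q j ≫ D.p j) ≫ (D.q j ≫ D.p j) := by rw [D.qp j]; simp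
    _ = D.q j ≫ (D.p j ≫ D.q j) ≫ D.p j := by simp
    _ = 0 := by rw [hc]; simp
  have hsub : ∀ j j' : Fin D.n, j = j' := by
    intro j j'
    by_contra h
    obtain ⟨c, hc0, hc⟩ := hpq j
    obtain ⟨c', hc0', hc'⟩ := hpq j'
    have h2 : (D.p j ≫ D.q j) ≫ (D.p j' ≫ D.q j') = 0 := by
      rw [show (D.p j ≫ D.q j) ≫ (D.p j' ≫ D.q j') = D.p j ≫ (D.q j ≫ D.p j') ≫ D.q j' by simp,
        D.orth j j' h]
      simp
    rw [hc, hc'] at h2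
    simp only [Linear.smul_comp, Linear.comp_smul, Category.id_comp, smul_smul] at h2
    rcases smul_eq_zero.mp h2 with h3 | h3
    · rcases mul_eq_zero.mp h3 with h4 | h4
      · exact absurd h4 hc0'
      · exact absurd h4 hc0
    · exact id_nonzero X h3
  have hn0 : D.n ≠ 0 := by
    intro h
    refine id_nonzero X ?_
    have := D.total
    rw [← this]
    apply Finset.sum_eq_zero
    intro j _
    exact absurd j.isLt (by omega)
  have hle : D.n ≤ 1 := by
    have := Fintype.card_le_one_iff.mpr hsub
    simpa using this
  have hn1 : D.n = 1 := by omega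
  rw [tr]
  have hterm : ∀ j, coeff hA (D.simple j) (D.q j ≫ 𝟙 X ≫ D.p j) = 1 := by
    intro j
    rw [Category.id_comp, D.qp j, coeff_id]
  rw [Finset.sum_congr rfl (fun j _ => hterm j), Finset.sum_const]
  simp [hn1]

lemma exists_tr_ne_zero (hA : IsSplitSemisimple k A) {X Y : A} (f : X ⟶ Y) (hf : f ≠ 0) :
    ∃ g : Y ⟶ X, tr hA (g ≫ f) ≠ 0 := by
  set D := dec hA X with hD
  set E := dec hA Y with hE
  have hcomp : ∃ j l, D.q j ≫ f ≫ E.p l ≠ 0 := by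
    by_contra h
    push_neg at h
    apply hf
    calc f = 𝟙 X ≫ f ≫ 𝟙 Y := by simp
    _ = ∑ j, ∑ l, D.p j ≫ (D.q j ≫ f ≫ E.p l) ≫ E.q l := by
        rw [← D.total, ← E.total]
        simp only [Preadditive.sum_comp, Preadditive.comp_sum, Category.assoc]
        rw [Finset.sum_comm]
    _ = 0 := by
        refine Finset.sum_eq_zero fun j _ => Finset.sum_eq_zero fun l _ => ?_
        rw [h j l]; simp
  obtain ⟨j, l, hx⟩ := hcomp
  obtain ⟨x, hxdef⟩ : ∃ x, x = D.q j ≫ f ≫ E.p l := ⟨_, rfl⟩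
  rw [← hxdef] at hx
  haveI : IsIso x := hA.isIso_of_ne_zero (D.simple j) (E.simple l) _ hx
  refine ⟨E.p l ≫ inv x ≫ D.q j, ?_⟩
  have ha : (E.p l ≫ inv x ≫ D.q j) ≫ f = (E.p l ≫ inv x) ≫ (D.q j ≫ f) := by simp
  rw [ha, tr_comm]
  have hb : (D.q j ≫ f) ≫ E.p l ≫ inv x = x ≫ inv x := by
    rw [← Category.assoc]
    congr 1
    rw [hxdef]
    simp
  rw [hb, IsIso.hom_inv_id, tr_simple_id hA (D.simple j)]
  exact one_ne_zero

noncomputable def pairing (hA : IsSplitSemisimple k A) (X Y : A) :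
    (X ⟶ Y) →ₗ[k] Module.Dual k (Y ⟶ X) where
  toFun f :=
    { toFun := fun g => tr hA (g ≫ f)
      map_add' := fun g g' => by
        show tr hA ((g + g') ≫ f) = tr hA (g ≫ f) + tr hA (g' ≫ f)
        rw [Preadditive.add_comp, tr_add]
      map_smul' := fun c g => by
        show tr hA ((c • g) ≫ f) = c • tr hA (g ≫ f)
        rw [CategoryTheory.Linear.smul_comp, tr_smul, smul_eq_mul]
      }
  map_add' f f' := by
    ext g
    show tr hA (g ≫ (f + f')) = tr hA (g ≫ f) + tr hA (g ≫ f')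
    rw [Preadditive.comp_add, tr_add]
  map_smul' c f := by
    ext g
    show tr hA (g ≫ (c • f)) = c * tr hA (g ≫ f)
    rw [CategoryTheory.Linear.comp_smul, tr_smul]

lemma pairing_injective (hA : IsSplitSemisimple k A) (X Y : A) :
    Function.Injective (pairing hA X Y) := by
  rw [injective_iff_map_eq_zero]
  intro f hf
  by_contra hf0
  obtain ⟨g, hg⟩ := exists_tr_ne_zero hA f hf0
  exact hg (congrFun (congrArg DFunLike.coe hf) g)

lemma finrank_hom_symm (hA : IsSplitSemisimple k A) (X Y : A) :
    finrank k (X ⟶ Y) = finrank k (Y ⟶ X) := by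
  haveI := hA.finiteDimensionalHom X Y
  haveI := hA.finiteDimensionalHom Y X
  refine le_antisymm ?_ ?_
  · have := LinearMap.finrank_le_finrank_of_injective (pairing_injective hA X Y)
    rwa [Subspace.dual_finrank_eq] at this
  · have := LinearMap.finrank_le_finrank_of_injective (pairing_injective hA Y X)
    rwa [Subspace.dual_finrank_eq] at this

noncomputable def pairingEquiv (hA : IsSplitSemisimple k A) (X Y : A) :
    (X ⟶ Y) ≃ₗ[k] Module.Dual k (Y ⟶ X) := by
  haveI := hA.finiteDimensionalHom X Y
  haveI := hA.finiteDimensionalHom Y X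
  refine LinearEquiv.ofBijective (pairing hA X Y) ⟨pairing_injective hA X Y, ?_⟩
  refine (LinearMap.injective_iff_surjective_of_finrank_eq_finrank ?_).mp
    (pairing_injective hA X Y)
  rw [Subspace.dual_finrank_eq, finrank_hom_symm hA X Y]

lemma pairingEquiv_apply_apply (hA : IsSplitSemisimple k A) (X Y : A) (f : X ⟶ Y) (g : Y ⟶ X) :
    pairingEquiv hA X Y f g = tr hA (g ≫ f) := rfl

end TraceCat

lemma bij_comp_pi {A : Type*} [Category A] [Preadditive A] {J : Type*} [Fintype J]
    {f : J → A} {P Z : A} (p : ∀ j, P ⟶ f j) (q : ∀ j, f j ⟶ P)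
    (hqp : ∀ j, q j ≫ p j = 𝟙 (f j)) (horth : ∀ j j', j ≠ j' → q j ≫ p j' = 0)
    (htot : ∑ j, p j ≫ q j = 𝟙 P) :
    Function.Bijective (fun (g : P ⟶ Z) => fun j => q j ≫ g) := by
  classical
  constructor
  · intro g g' h
    have hco : ∀ j, q j ≫ g = q j ≫ g' := fun j => congrFun h j
    calc g = 𝟙 P ≫ g := by simp
    _ = ∑ j, p j ≫ (q j ≫ g) := by rw [← htot]; simp [Preadditive.sum_comp]
    _ = ∑ j, p j ≫ (q j ≫ g') := by simp_rw [hco]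
    _ = 𝟙 P ≫ g' := by rw [← htot]; simp [Preadditive.sum_comp]
    _ = g' := by simp
  · intro φ
    refine ⟨∑ j, p j ≫ φ j, ?_⟩
    funext j'
    show q j' ≫ ∑ j, p j ≫ φ j = φ j'
    rw [Preadditive.comp_sum]
    rw [Finset.sum_eq_single j']
    · rw [← Category.assoc, hqp j', Category.id_comp]
    · intro j _ hj
      rw [← Category.assoc, horth j' j (Ne.symm hj), zero_comp]
    · intro h
      exact absurd (Finset.mem_univ j') h

section Construct

variable {C M : Type*} [Category C] [Category M]
  [Preadditive C] [CategoryTheory.Linear k C] [Preadditive M] [CategoryTheory.Linear k M]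
  (F : C ⥤ M) [F.Additive] [F.Linear k]
  {ι : Type} [Fintype ι] (t : ι → C) [HasFiniteBiproducts C]
  (Y : M) (d : ι → ℕ) (bb : ∀ i, Basis (Fin (d i)) k (F.obj (t i) ⟶ Y))

noncomputable def Psi (X : C) :
    (X ⟶ ⨁ (fun p : Σ i, Fin (d i) => t p.1)) →ₗ[k] (F.obj X ⟶ Y) where
  toFun g := ∑ p : Σ i, Fin (d i), F.map (g ≫ biproduct.π _ p) ≫ bb p.1 p.2
  map_add' g h := by
    rw [← Finset.sum_add_distrib]
    refine Finset.sum_congr rfl fun p _ => ?_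
    rw [Preadditive.add_comp, F.map_add, Preadditive.add_comp]
  map_smul' c g := by
    rw [RingHom.id_apply, Finset.smul_sum]
    refine Finset.sum_congr rfl fun p _ => ?_
    rw [CategoryTheory.Linear.smul_comp, F.map_smul, CategoryTheory.Linear.smul_comp]

lemma Psi_apply (X : C) (g : X ⟶ ⨁ (fun p : Σ i, Fin (d i) => t p.1)) :
    Psi F t Y d bb X g = ∑ p : Σ i, Fin (d i), F.map (g ≫ biproduct.π _ p) ≫ bb p.1 p.2 := rfl

lemma Psi_natural {X' X : C} (h : X' ⟶ X) (g : X ⟶ ⨁ (fun p : Σ i, Fin (d i) => t p.1)) :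
    Psi F t Y d bb X' (h ≫ g) = F.map h ≫ Psi F t Y d bb X g := by
  rw [Psi_apply, Psi_apply, Preadditive.comp_sum]
  refine Finset.sum_congr rfl fun p _ => ?_
  rw [Category.assoc, F.map_comp, Category.assoc]

lemma Psi_bij_t (hzero : ∀ i i', i ≠ i' → ∀ f : t i ⟶ t i', f = 0)
    (hsmul : ∀ i (f : t i ⟶ t i), ∃ c : k, f = c • 𝟙 (t i)) (i : ι) :
    Function.Bijective (Psi F t Y d bb (t i)) := by
  classical
  constructor
  · rw [injective_iff_map_eq_zero]
    intro g hg
    choose c hc using fun j : Fin (d i) =>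
      hsmul i (g ≫ biproduct.π (fun p : Σ i', Fin (d i') => t p.1) ⟨i, j⟩)
    have hzero' : ∀ p : Σ i', Fin (d i'), p.1 ≠ i →
        g ≫ biproduct.π (fun p : Σ i', Fin (d i') => t p.1) p = 0 :=
      fun p hp => hzero i p.1 (Ne.symm hp) _
    have hsum : ∑ j : Fin (d i), c j • bb i j = 0 := by
      rw [← hg, Psi_apply, ← Finset.univ_sigma_univ, Finset.sum_sigma]
      rw [Finset.sum_eq_single i]
      · refine Finset.sum_congr rfl fun j _ => ?_
        rw [hc j, F.map_smul, CategoryTheory.Linear.smul_comp, F.map_id, Category.id_comp]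
      · intro i' _ hi'
        refine Finset.sum_eq_zero fun j _ => ?_
        rw [hzero' ⟨i', j⟩ hi', F.map_zero, zero_comp]
      · intro h
        exact absurd (Finset.mem_univ i) h
    have hc0 : ∀ j, c j = 0 :=
      Fintype.linearIndependent_iff.mp (bb i).linearIndependent c hsum
    apply biproduct.hom_ext
    intro p
    rw [zero_comp]
    rcases eq_or_ne p.1 i with hp | hp
    · obtain ⟨pi, pj⟩ := p
      dsimp at hp
      subst hp
      rw [hc pj, hc0, zero_smul]
    · exact hzero' p hp
  · intro u
    refine ⟨∑ j : Fin (d i), ((bb i).repr u j) •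
      biproduct.ι (fun p : Σ i', Fin (d i') => t p.1) ⟨i, j⟩, ?_⟩
    rw [map_sum]
    have hPsiι : ∀ j : Fin (d i),
        Psi F t Y d bb (t i) (biproduct.ι (fun p : Σ i', Fin (d i') => t p.1) ⟨i, j⟩)
          = bb i j := by
      intro j
      rw [Psi_apply]
      rw [Finset.sum_eq_single (⟨i, j⟩ : Σ i', Fin (d i'))]
      · rw [biproduct.ι_π_self, F.map_id, Category.id_comp]
      · intro p _ hp
        rw [biproduct.ι_π_ne _ (Ne.symm hp), F.map_zero, zero_comp]
      · intro h
        exact absurd (Finset.mem_univ _) h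
    have : ∀ j : Fin (d i), Psi F t Y d bb (t i)
        ((bb i).repr u j • biproduct.ι (fun p : Σ i', Fin (d i') => t p.1) ⟨i, j⟩)
        = (bb i).repr u j • bb i j := by
      intro j
      rw [map_smul, hPsiι]
    rw [Finset.sum_congr rfl fun j _ => this j]
    exact (bb i).sum_repr u

lemma Psi_bij_all (hzero : ∀ i i', i ≠ i' → ∀ f : t i ⟶ t i', f = 0)
    (hsmul : ∀ i (f : t i ⟶ t i), ∃ c : k, f = c • 𝟙 (t i))
    (hdec : ∀ X : C, ∃ (n : ℕ) (cidx : Fin n → ι) (p : ∀ j, X ⟶ t (cidx j))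
      (q : ∀ j, t (cidx j) ⟶ X),
      (∀ j, q j ≫ p j = 𝟙 (t (cidx j))) ∧ (∀ j j', j ≠ j' → q j ≫ p j' = 0) ∧
        ∑ j, p j ≫ q j = 𝟙 X)
    (X : C) : Function.Bijective (Psi F t Y d bb X) := by
  obtain ⟨n, cidx, p, q, h1, h2, h3⟩ := hdec X
  have htop := bij_comp_pi (Z := ⨁ (fun p : Σ i, Fin (d i) => t p.1)) p q h1 h2 h3
  have hbot := bij_comp_pi (Z := Y) (fun j => F.map (p j)) (fun j => F.map (q j))
    (fun j => by rw [← F.map_comp, h1, F.map_id])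
    (fun j j' h => by rw [← F.map_comp, h2 j j' h, F.map_zero])
    (by
      have : ∀ j : Fin n, F.map (p j) ≫ F.map (q j) = F.map (p j ≫ q j) :=
        fun j => (F.map_comp _ _).symm
      rw [Finset.sum_congr rfl fun j _ => this j, ← F.map_sum, h3, F.map_id])
  have hmid : Function.Bijective
      (fun (φ : ∀ j : Fin n, (t (cidx j) ⟶ ⨁ (fun p : Σ i, Fin (d i) => t p.1)))
        (j : Fin n) => Psi F t Y d bb (t (cidx j)) (φ j)) := by
    constructor
    · intro φ φ' h
      funext j
      exact (Psi_bij_t F t Y d bb hzero hsmul (cidx j)).injective (congrFun h j)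
    · intro ψ
      choose φ hφ using fun j => (Psi_bij_t F t Y d bb hzero hsmul (cidx j)).surjective (ψ j)
      exact ⟨φ, funext hφ⟩
  have hcomm : (fun (u : F.obj X ⟶ Y) (j : Fin n) => F.map (q j) ≫ u) ∘ (Psi F t Y d bb X)
      = (fun φ (j : Fin n) => Psi F t Y d bb (t (cidx j)) (φ j)) ∘ (fun g j => q j ≫ g) := by
    funext g
    funext j
    exact (Psi_natural F t Y d bb (q j) g).symm
  have hcb : Function.Bijective
      ((fun (u : F.obj X ⟶ Y) (j : Fin n) => F.map (q j) ≫ u) ∘ (Psi F t Y d bb X)) := by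
    rw [hcomm]
    exact hmid.comp htop
  exact (Function.Bijective.of_comp_iff' hbot (Psi F t Y d bb X)).mp hcb

end Construct

end SSAux

/-- If `C` and `M` are split semisimple `k`-linear categories with finite-dimensional
hom-spaces and `C` has only finitely many isomorphism classes of simple objects, then every
`k`-linear functor `F : C ⥤ M` admits a right adjoint, which is simultaneously a left
adjoint of `F`. -/
theorem exists_right_adjoint_of_splitSemisimple
    {k : Type*} [Field k] {C M : Type*} [Category C] [Category M]
    [Preadditive C] [Linear k C] [Preadditive M] [Linear k M]
    (hC : IsSplitSemisimple k C) (hM : IsSplitSemisimple k M)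
    (hfin : ∃ (n : ℕ) (s : Fin n → C), (∀ i, Simple (s i)) ∧
      ∀ X : C, Simple X → ∃ i, Nonempty (X ≅ s i))
    (F : C ⥤ M) [F.Additive] [F.Linear k] :
    ∃ G : M ⥤ C, Nonempty (F ⊣ G) ∧ Nonempty (G ⊣ F) := by
  classical
  haveI : HasFiniteBiproducts C := hC.hasFiniteBiproducts
  haveI : ∀ P Q : M, FiniteDimensional k (P ⟶ Q) := hM.finiteDimensionalHom
  obtain ⟨n, s, hs, hcov⟩ := hfin
  let sd : Setoid (Fin n) :=
    ⟨fun i j => Nonempty (s i ≅ s j),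
     ⟨fun i => ⟨Iso.refl _⟩, fun {i j} h => h.elim fun e => ⟨e.symm⟩,
      fun {i j l} h h' => h.elim fun e => h'.elim fun e' => ⟨e.trans e'⟩⟩⟩
  let ι := Quotient sd
  haveI : Fintype ι := @Quotient.fintype _ _ sd (fun a b => Classical.dec _)
  let t : ι → C := fun q => s q.out
  have hzero : ∀ q q', q ≠ q' → ∀ f : t q ⟶ t q', f = 0 := by
    intro q q' hne f
    by_contra hf
    haveI := hC.isIso_of_ne_zero (hs _) (hs _) f hf
    exact hne (Quotient.out_equiv_out.mp ⟨asIso f⟩)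
  have hsmul : ∀ q (f : t q ⟶ t q), ∃ c : k, f = c • 𝟙 (t q) :=
    fun q => hC.exists_smul_id (hs _)
  have hcov' : ∀ X : C, Simple X → ∃ q : ι, Nonempty (X ≅ t q) := by
    intro X hX
    obtain ⟨i, ⟨e⟩⟩ := hcov X hX
    have h := Quotient.mk_out (s := sd) i
    obtain ⟨e'⟩ := h
    exact ⟨⟦i⟧, ⟨e.trans e'.symm⟩⟩
  have hdec : ∀ X : C, ∃ (m : ℕ) (cidx : Fin m → ι) (p : ∀ j, X ⟶ t (cidx j))
      (q : ∀ j, t (cidx j) ⟶ X),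
      (∀ j, q j ≫ p j = 𝟙 (t (cidx j))) ∧ (∀ j j', j ≠ j' → q j ≫ p j' = 0) ∧
        ∑ j, p j ≫ q j = 𝟙 X := by
    intro X
    obtain ⟨D⟩ := SSAux.nonempty_decompData hC X
    choose cidx hiso using fun j => hcov' (D.s j) (D.simple j)
    have iso : ∀ j, D.s j ≅ t (cidx j) := fun j => (hiso j).some
    refine ⟨D.n, cidx, fun j => D.p j ≫ (iso j).hom, fun j => (iso j).inv ≫ D.q j, ?_, ?_, ?_⟩
    · intro j
      have h : ((iso j).inv ≫ D.q j) ≫ D.p j ≫ (iso j).hom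
          = (iso j).inv ≫ (D.q j ≫ D.p j) ≫ (iso j).hom := by simp
      rw [h, D.qp j]
      simp
    · intro j j' hj
      have h : ((iso j).inv ≫ D.q j) ≫ D.p j' ≫ (iso j').hom
          = (iso j).inv ≫ (D.q j ≫ D.p j') ≫ (iso j').hom := by simp
      rw [h, D.orth j j' hj]
      simp
    · have h : ∀ j, (D.p j ≫ (iso j).hom) ≫ (iso j).inv ≫ D.q j = D.p j ≫ D.q j := by
        intro j; simp
      rw [Finset.sum_congr rfl fun j _ => h j, D.total]
  -- the right adjoint on objects
  let dY : M → ι → ℕ := fun Y q => finrank k (F.obj (t q) ⟶ Y)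
  let bb : ∀ (Y : M) (q : ι), Basis (Fin (dY Y q)) k (F.obj (t q) ⟶ Y) :=
    fun Y q => Module.finBasis k _
  let G0 : M → C := fun Y => ⨁ (fun p : Σ q : ι, Fin (dY Y q) => t p.1)
  let PsiL : ∀ (Y : M) (X : C), (X ⟶ G0 Y) ≃ₗ[k] (F.obj X ⟶ Y) := fun Y X =>
    LinearEquiv.ofBijective (SSAux.Psi F t Y (dY Y) (bb Y) X)
      (SSAux.Psi_bij_all F t Y (dY Y) (bb Y) hzero hsmul hdec X)
  let e : ∀ (X : C) (Y : M), (F.obj X ⟶ Y) ≃ (X ⟶ G0 Y) := fun X Y => (PsiL Y X).toEquiv.symm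
  have ePsi : ∀ (X : C) (Y : M) (u : X ⟶ G0 Y),
      e X Y (SSAux.Psi F t Y (dY Y) (bb Y) X u) = u :=
    fun X Y u => (PsiL Y X).toEquiv.symm_apply_apply u
  have Psie : ∀ (X : C) (Y : M) (b : F.obj X ⟶ Y),
      SSAux.Psi F t Y (dY Y) (bb Y) X (e X Y b) = b :=
    fun X Y b => (PsiL Y X).toEquiv.apply_symm_apply b
  have he : ∀ (X' X : C) (Y : M) (f : X' ⟶ X) (g : F.obj X ⟶ Y),
      e X' Y (F.map f ≫ g) = f ≫ e X Y g := by
    intro X' X Y f g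
    have h1 := SSAux.Psi_natural F t Y (dY Y) (bb Y) f (e X Y g)
    rw [Psie X Y g] at h1
    calc e X' Y (F.map f ≫ g)
        = e X' Y (SSAux.Psi F t Y (dY Y) (bb Y) X' (f ≫ e X Y g)) := by rw [h1]
    _ = f ≫ e X Y g := ePsi X' Y _
  let G : M ⥤ C := Adjunction.rightAdjointOfEquiv (fun X Y => e X Y) he
  have hGmap : ∀ (Y Y' : M) (v : Y ⟶ Y'),
      G.map v = e (G0 Y) Y' ((e (G0 Y) Y).symm (𝟙 (G0 Y)) ≫ v) := fun _ _ _ => rfl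
  have natright : ∀ (X : C) (Y Y' : M) (f : F.obj X ⟶ Y) (g : Y ⟶ Y'),
      e X Y' (f ≫ g) = e X Y f ≫ G.map g := by
    intro X Y Y' f g
    have h1 : SSAux.Psi F t Y' (dY Y') (bb Y') X (e X Y f ≫ G.map g)
        = F.map (e X Y f) ≫ SSAux.Psi F t Y' (dY Y') (bb Y') (G0 Y) (G.map g) :=
      SSAux.Psi_natural F t Y' (dY Y') (bb Y') (e X Y f) (G.map g)
    have h2 : SSAux.Psi F t Y' (dY Y') (bb Y') (G0 Y) (G.map g)
        = SSAux.Psi F t Y (dY Y) (bb Y) (G0 Y) (𝟙 (G0 Y)) ≫ g := by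
      rw [hGmap]
      rw [show (e (G0 Y) Y).symm (𝟙 (G0 Y))
        = SSAux.Psi F t Y (dY Y) (bb Y) (G0 Y) (𝟙 (G0 Y)) from rfl]
      exact Psie (G0 Y) Y' _
    have h3 : F.map (e X Y f) ≫ SSAux.Psi F t Y (dY Y) (bb Y) (G0 Y) (𝟙 (G0 Y)) = f := by
      have h4 := SSAux.Psi_natural F t Y (dY Y) (bb Y) (e X Y f) (𝟙 (G0 Y))
      rw [Category.comp_id] at h4
      rw [← h4, Psie]
    calc e X Y' (f ≫ g)
        = e X Y' (SSAux.Psi F t Y' (dY Y') (bb Y') X (e X Y f ≫ G.map g)) := by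
          rw [h1, h2, ← Category.assoc, h3]
    _ = e X Y f ≫ G.map g := ePsi _ _ _
  let adjcore : Adjunction.CoreHomEquiv F G :=
    { homEquiv := e
      homEquiv_naturality_left_symm := by
        intro X' X Y f g
        exact SSAux.Psi_natural F t Y (dY Y) (bb Y) f g
      homEquiv_naturality_right := by
        intro X Y Y' f g
        exact natright X Y Y' f g }
  let adj1 : F ⊣ G := Adjunction.mkOfHomEquiv adjcore
  -- the second adjunction
  let DM : ∀ (P Q : M), (P ⟶ Q) ≃ₗ[k] Module.Dual k (Q ⟶ P) :=
    fun P Q => SSAux.pairingEquiv hM P Q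
  let DC : ∀ (P Q : C), (P ⟶ Q) ≃ₗ[k] Module.Dual k (Q ⟶ P) :=
    fun P Q => SSAux.pairingEquiv hC P Q
  let e' : ∀ (Y : M) (X : C), (G0 Y ⟶ X) ≃ (Y ⟶ F.obj X) := fun Y X =>
    ((DC (G0 Y) X).trans ((((PsiL Y X).symm).dualMap).trans (DM Y (F.obj X)).symm)).toEquiv
  have hsymmeq : ∀ (X : C) (Y : M) (b : F.obj X ⟶ Y), (PsiL Y X).symm b = e X Y b :=
    fun _ _ _ => rfl
  have echar : ∀ (Y : M) (X : C) (u : G0 Y ⟶ X) (b : F.obj X ⟶ Y),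
      SSAux.tr hM (b ≫ e' Y X u) = SSAux.tr hC (e X Y b ≫ u) := by
    intro Y X u b
    have h1 : DM Y (F.obj X) (e' Y X u) = ((PsiL Y X).symm).dualMap (DC (G0 Y) X u) := by
      show DM Y (F.obj X)
        ((DM Y (F.obj X)).symm (((PsiL Y X).symm).dualMap (DC (G0 Y) X u))) = _
      rw [LinearEquiv.apply_symm_apply]
    have h2 : SSAux.tr hM (b ≫ e' Y X u) = DM Y (F.obj X) (e' Y X u) b :=
      (SSAux.pairingEquiv_apply_apply hM Y (F.obj X) (e' Y X u) b).symm
    rw [h2, h1, LinearEquiv.dualMap_apply, hsymmeq]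
    exact SSAux.pairingEquiv_apply_apply hC (G0 Y) X u (e X Y b)
  have einj : ∀ (Y : M) (X : C) (w w' : Y ⟶ F.obj X),
      (∀ b : F.obj X ⟶ Y, SSAux.tr hM (b ≫ w) = SSAux.tr hM (b ≫ w')) → w = w' := by
    intro Y X w w' h
    apply (DM Y (F.obj X)).injective
    apply LinearMap.ext
    intro b
    show SSAux.tr hM (b ≫ w) = SSAux.tr hM (b ≫ w')
    exact h b
  have natrightE : ∀ (Y : M) (X X' : C) (u : G0 Y ⟶ X) (h : X ⟶ X'),
      e' Y X' (u ≫ h) = e' Y X u ≫ F.map h := by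
    intro Y X X' u h
    apply einj
    intro b
    rw [echar]
    calc SSAux.tr hC (e X' Y b ≫ u ≫ h)
        = SSAux.tr hC ((e X' Y b ≫ u) ≫ h) := by rw [Category.assoc]
    _ = SSAux.tr hC (h ≫ e X' Y b ≫ u) := (SSAux.tr_comm hC _ _).symm
    _ = SSAux.tr hC ((h ≫ e X' Y b) ≫ u) := by rw [Category.assoc]
    _ = SSAux.tr hC (e X Y (F.map h ≫ b) ≫ u) := by rw [he X X' Y h b]
    _ = SSAux.tr hM ((F.map h ≫ b) ≫ e' Y X u) := (echar Y X u (F.map h ≫ b)).symm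
    _ = SSAux.tr hM (F.map h ≫ b ≫ e' Y X u) := by rw [Category.assoc]
    _ = SSAux.tr hM ((b ≫ e' Y X u) ≫ F.map h) := SSAux.tr_comm hM _ _
    _ = SSAux.tr hM (b ≫ e' Y X u ≫ F.map h) := by rw [Category.assoc]
  have natleftE : ∀ (Y Y' : M) (X : C) (v : Y ⟶ Y') (u : G0 Y' ⟶ X),
      e' Y X (G.map v ≫ u) = v ≫ e' Y' X u := by
    intro Y Y' X v u
    apply einj
    intro b
    rw [echar]
    calc SSAux.tr hC (e X Y b ≫ G.map v ≫ u)
        = SSAux.tr hC ((e X Y b ≫ G.map v) ≫ u) := by rw [Category.assoc]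
    _ = SSAux.tr hC (e X Y' (b ≫ v) ≫ u) := by rw [natright X Y Y' b v]
    _ = SSAux.tr hM ((b ≫ v) ≫ e' Y' X u) := (echar Y' X u (b ≫ v)).symm
    _ = SSAux.tr hM (b ≫ v ≫ e' Y' X u) := by rw [Category.assoc]
  let adjcore2 : Adjunction.CoreHomEquiv G F :=
    { homEquiv := fun Y X => e' Y X
      homEquiv_naturality_left_symm := by
        intro Y' Y X f g
        have h2 : (e' Y X) ((e' Y X).symm g) = g := Equiv.apply_symm_apply _ g
        have h := natleftE Y' Y X f ((e' Y X).symm g)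
        rw [h2] at h
        exact (Equiv.symm_apply_eq _).mpr h.symm
      homEquiv_naturality_right := by
        intro Y X X' f g
        exact natrightE Y X X' f g }
  exact ⟨G, ⟨adj1⟩, ⟨Adjunction.mkOfHomEquiv adjcore2⟩⟩
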